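/- Hamilton–Jacobi–Bellman supersolution property: Let B(x₁,x₂,x₃,x₄) = (p/(p-1))^p x₁ − (p^p/(p-1)) x₂^p/(x₃+(p-1)x₄)^(p-1) on the interior of D. Then for every interior point x of D, every u = (u₁,u₂,u₃,u₄) ∈ ℝ⁴, and every u₅ ≥ 0: −(∂B/∂x₃)(x)·u₅ + ½ Σ_{i,j=1}^4 (∂²B/∂xᵢ∂xⱼ)(x) uᵢ uⱼ + p^p (x₂/(x₃+(p-1)x₄))^p u₅ ≤ 0. -/

import Mathlib

/-- The domain `D` of the Bellman function. -/
def bellmanDomain (p : ℝ) : Set (ℝ × ℝ × ℝ × ℝ) :=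
  {x | 0 ≤ x.1 ∧ 0 ≤ x.2.1 ∧ 0 < x.2.2.1 ∧ 0 < x.2.2.2 ∧ x.2.2.1 ≤ x.2.2.2 ∧
    x.2.1 ^ p ≤ x.1 * x.2.2.2 ^ (p - 1)}

/-- The Bellman function `B`. -/
noncomputable def bellmanB (p : ℝ) (x : ℝ × ℝ × ℝ × ℝ) : ℝ :=
  (p / (p - 1)) ^ p * x.1 - (p ^ p / (p - 1)) * x.2.1 ^ p / (x.2.2.1 + (p - 1) * x.2.2.2) ^ (p - 1)

section BellmanAux

/-- coordinate projections as continuous linear maps -/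
noncomputable def bp1 : (ℝ × ℝ × ℝ × ℝ) →L[ℝ] ℝ := ContinuousLinearMap.fst ℝ ℝ (ℝ × ℝ × ℝ)
noncomputable def bp2 : (ℝ × ℝ × ℝ × ℝ) →L[ℝ] ℝ :=
  (ContinuousLinearMap.fst ℝ ℝ (ℝ × ℝ)).comp (ContinuousLinearMap.snd ℝ ℝ (ℝ × ℝ × ℝ))
noncomputable def bp3 : (ℝ × ℝ × ℝ × ℝ) →L[ℝ] ℝ :=
  (ContinuousLinearMap.fst ℝ ℝ ℝ).comp
    ((ContinuousLinearMap.snd ℝ ℝ (ℝ × ℝ)).comp (ContinuousLinearMap.snd ℝ ℝ (ℝ × ℝ × ℝ)))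
noncomputable def bp4 : (ℝ × ℝ × ℝ × ℝ) →L[ℝ] ℝ :=
  (ContinuousLinearMap.snd ℝ ℝ ℝ).comp
    ((ContinuousLinearMap.snd ℝ ℝ (ℝ × ℝ)).comp (ContinuousLinearMap.snd ℝ ℝ (ℝ × ℝ × ℝ)))

@[simp] lemma bp1_apply (z : ℝ × ℝ × ℝ × ℝ) : bp1 z = z.1 := rfl
@[simp] lemma bp2_apply (z : ℝ × ℝ × ℝ × ℝ) : bp2 z = z.2.1 := rfl
@[simp] lemma bp3_apply (z : ℝ × ℝ × ℝ × ℝ) : bp3 z = z.2.2.1 := rfl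
@[simp] lemma bp4_apply (z : ℝ × ℝ × ℝ × ℝ) : bp4 z = z.2.2.2 := rfl

lemma hasFDerivAt_tfun (p : ℝ) (y : ℝ × ℝ × ℝ × ℝ) :
    HasFDerivAt (fun z : ℝ × ℝ × ℝ × ℝ => z.2.2.1 + (p - 1) * z.2.2.2)
      (bp3 + (p - 1) • bp4) y := by
  have h3 : HasFDerivAt (fun z : ℝ × ℝ × ℝ × ℝ => z.2.2.1) bp3 y := bp3.hasFDerivAt
  have h4 : HasFDerivAt (fun z : ℝ × ℝ × ℝ × ℝ => z.2.2.2) bp4 y := bp4.hasFDerivAt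
  exact h3.add (h4.const_mul (p - 1))

lemma hasFDerivAt_ppow (p e f : ℝ) (y : ℝ × ℝ × ℝ × ℝ) (h2 : y.2.1 ≠ 0)
    (ht : y.2.2.1 + (p - 1) * y.2.2.2 ≠ 0) :
    HasFDerivAt (fun z : ℝ × ℝ × ℝ × ℝ =>
        z.2.1 ^ e * (z.2.2.1 + (p - 1) * z.2.2.2) ^ f)
      ((e * y.2.1 ^ (e - 1) * (y.2.2.1 + (p - 1) * y.2.2.2) ^ f) • bp2
        + (y.2.1 ^ e * (f * (y.2.2.1 + (p - 1) * y.2.2.2) ^ (f - 1))) • (bp3 + (p - 1) • bp4))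
      y := by
  have hA : HasFDerivAt (fun z : ℝ × ℝ × ℝ × ℝ => z.2.1 ^ e)
      ((e * y.2.1 ^ (e - 1)) • bp2) y :=
    (bp2.hasFDerivAt (x := y)).rpow_const (Or.inl h2)
  have hB : HasFDerivAt (fun z : ℝ × ℝ × ℝ × ℝ => (z.2.2.1 + (p - 1) * z.2.2.2) ^ f)
      ((f * (y.2.2.1 + (p - 1) * y.2.2.2) ^ (f - 1)) • (bp3 + (p - 1) • bp4)) y :=
    (hasFDerivAt_tfun p y).rpow_const (Or.inl ht)
  have := hA.mul' hB
  refine (hA.mul hB).congr_fderiv ?_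
  refine ContinuousLinearMap.ext fun (w : ℝ × ℝ × ℝ × ℝ) => ?_
  simp [ContinuousLinearMap.smul_apply, ContinuousLinearMap.add_apply, smul_eq_mul]
  ring

/-- Explicit derivative of `bellmanB`. -/
noncomputable def bellmanD (p : ℝ) (y : ℝ × ℝ × ℝ × ℝ) : (ℝ × ℝ × ℝ × ℝ) →L[ℝ] ℝ :=
  ((p / (p - 1)) ^ p) • bp1
    + (-(p ^ p / (p - 1)) * (p * y.2.1 ^ (p - 1)
        * (y.2.2.1 + (p - 1) * y.2.2.2) ^ (-(p - 1)))) • bp2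
    + (-(p ^ p / (p - 1)) * (y.2.1 ^ p
        * (-(p - 1) * (y.2.2.1 + (p - 1) * y.2.2.2) ^ (-(p - 1) - 1)))) • (bp3 + (p - 1) • bp4)

lemma bellman_hasFDerivAt (p : ℝ) (y : ℝ × ℝ × ℝ × ℝ) (h2 : y.2.1 ≠ 0)
    (ht : 0 < y.2.2.1 + (p - 1) * y.2.2.2) :
    HasFDerivAt (bellmanB p) (bellmanD p y) y := by
  have h1 : HasFDerivAt (fun z : ℝ × ℝ × ℝ × ℝ => (p / (p - 1)) ^ p * z.1)
      (((p / (p - 1)) ^ p) • bp1) y := (bp1.hasFDerivAt (x := y)).const_mul _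
  have h2' := (hasFDerivAt_ppow p p (-(p - 1)) y h2 ht.ne').const_mul (-(p ^ p / (p - 1)))
  have hG := h1.add h2'
  have hGD : HasFDerivAt (fun z : ℝ × ℝ × ℝ × ℝ => (p / (p - 1)) ^ p * z.1
      + (-(p ^ p / (p - 1))) * (z.2.1 ^ p * (z.2.2.1 + (p - 1) * z.2.2.2) ^ (-(p - 1))))
      (bellmanD p y) y := by
    refine hG.congr_fderiv ?_
    refine ContinuousLinearMap.ext fun (w : ℝ × ℝ × ℝ × ℝ) => ?_
    simp [bellmanD, ContinuousLinearMap.smul_apply, ContinuousLinearMap.add_apply, smul_eq_mul,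
      mul_comm, mul_left_comm, mul_assoc]
    ring
  refine hGD.congr_of_eventuallyEq ?_
  have hop : IsOpen {z : ℝ × ℝ × ℝ × ℝ | 0 < z.2.2.1 + (p - 1) * z.2.2.2} :=
    isOpen_lt continuous_const (by fun_prop)
  filter_upwards [hop.mem_nhds ht] with z hz
  have hz' : (0:ℝ) < z.2.2.1 + (p - 1) * z.2.2.2 := hz
  unfold bellmanB
  rw [Real.rpow_neg hz'.le]
  ring

end BellmanAux

set_option maxHeartbeats 1000000 in
/-- Hamilton–Jacobi–Bellman supersolution property: `−∂₃B·u₅ + ½⟨Hess B · u, u⟩ +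
p^p (x₂/(x₃+(p−1)x₄))^p u₅ ≤ 0`.  Here `∂₃B` is the derivative of `B` in the direction
`(0,0,1,0)` and the quadratic form `Σ uᵢuⱼ ∂ᵢⱼB` is the second directional derivative of
`B` along `u`. -/
theorem bellman_HJB_supersolution (p : ℝ) (hp : 1 < p)
    (x : ℝ × ℝ × ℝ × ℝ) (hx : x ∈ interior (bellmanDomain p))
    (u : ℝ × ℝ × ℝ × ℝ) (u5 : ℝ) (hu5 : 0 ≤ u5) :
    -(fderiv ℝ (bellmanB p) x ((0 : ℝ), (0 : ℝ), (1 : ℝ), (0 : ℝ))) * u5 +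
      (1 / 2) * (fderiv ℝ (fun y => fderiv ℝ (bellmanB p) y u) x u) +
      p ^ p * (x.2.1 / (x.2.2.1 + (p - 1) * x.2.2.2)) ^ p * u5 ≤ 0 := by
  obtain ⟨h1, h2nn, h3, h4, h34, hineq⟩ := interior_subset hx
  have hp1 : (0:ℝ) < p - 1 := sub_pos.mpr hp
  have hp0 : (0:ℝ) < p := by linarith
  set s : ℝ := x.2.2.1 + (p - 1) * x.2.2.2 with hs_def
  have hs : 0 < s := by
    have := mul_pos hp1 h4; simp only [hs_def]; linarith
  -- x.2.1 > 0 on the interior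
  have h2 : 0 < x.2.1 := by
    rcases lt_or_eq_of_le h2nn with h | h
    · exact h
    · exfalso
      have hD : bellmanDomain p ∈ nhds x := mem_interior_iff_mem_nhds.mp hx
      have hcont : ContinuousAt (fun t : ℝ => ((x.1, t, x.2.2.1, x.2.2.2) : ℝ × ℝ × ℝ × ℝ)) 0 := by
        fun_prop
      have hx0 : ((x.1, (0:ℝ), x.2.2.1, x.2.2.2) : ℝ × ℝ × ℝ × ℝ) = x := by
        rw [h]
      rw [← hx0] at hD
      have hpre := hcont.preimage_mem_nhds hD
      have hsub : (fun t : ℝ => ((x.1, t, x.2.2.1, x.2.2.2) : ℝ × ℝ × ℝ × ℝ)) ⁻¹'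
          bellmanDomain p ⊆ Set.Ici 0 := fun t ht => ht.2.1
      have : Set.Ici (0:ℝ) ∈ nhds (0:ℝ) := Filter.mem_of_superset hpre hsub
      have h0 : (0:ℝ) ∈ interior (Set.Ici (0:ℝ)) := mem_interior_iff_mem_nhds.mpr this
      rw [interior_Ici] at h0
      exact lt_irrefl 0 (Set.mem_Ioi.mp h0)
  -- the first derivative of B
  have hBD := bellman_hasFDerivAt p x h2.ne' hs
  -- value of the first term
  have hE : fderiv ℝ (bellmanB p) x ((0 : ℝ), (0 : ℝ), (1 : ℝ), (0 : ℝ))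
      = p ^ p * x.2.1 ^ p * s ^ (-p) := by
    rw [hBD.fderiv]
    simp only [bellmanD, ContinuousLinearMap.add_apply, ContinuousLinearMap.smul_apply,
      smul_eq_mul, bp1_apply, bp2_apply, bp3_apply, bp4_apply]
    have hexp : -(p - 1) - 1 = -p := by ring
    rw [hexp]
    field_simp
    ring
  -- third term equals the first term's coefficient
  have hT3 : p ^ p * (x.2.1 / s) ^ p = p ^ p * x.2.1 ^ p * s ^ (-p) := by
    rw [Real.div_rpow h2nn hs.le, Real.rpow_neg hs.le]
    ring
  -- second derivative: replace the inner fderiv by the explicit formula near x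
  set v : ℝ := u.2.2.1 + (p - 1) * u.2.2.2 with hv_def
  set K : ℝ := p ^ p / (p - 1) with hK_def
  set h : (ℝ × ℝ × ℝ × ℝ) → ℝ := fun y =>
    (p / (p - 1)) ^ p * u.1
      + (-K * p * u.2.1) * (y.2.1 ^ (p - 1) * (y.2.2.1 + (p - 1) * y.2.2.2) ^ (-(p - 1)))
      + (-K * (-(p - 1)) * v) * (y.2.1 ^ p * (y.2.2.1 + (p - 1) * y.2.2.2) ^ (-(p - 1) - 1))
    with hh_def
  have hc1 : Continuous fun z : ℝ × ℝ × ℝ × ℝ => z.2.1 := by fun_prop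
  have hc2 : Continuous fun z : ℝ × ℝ × ℝ × ℝ => z.2.2.1 + (p - 1) * z.2.2.2 := by fun_prop
  have hUopen : IsOpen {z : ℝ × ℝ × ℝ × ℝ | 0 < z.2.1 ∧ 0 < z.2.2.1 + (p - 1) * z.2.2.2} :=
    (isOpen_lt continuous_const hc1).inter (isOpen_lt continuous_const hc2)
  have hxU : x ∈ {z : ℝ × ℝ × ℝ × ℝ | 0 < z.2.1 ∧ 0 < z.2.2.1 + (p - 1) * z.2.2.2} := ⟨h2, hs⟩
  have hgh : (fun y => fderiv ℝ (bellmanB p) y u) =ᶠ[nhds x] h := by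
    filter_upwards [hUopen.mem_nhds hxU] with z hz
    rw [(bellman_hasFDerivAt p z hz.1.ne' hz.2).fderiv]
    simp only [hh_def, bellmanD, ContinuousLinearMap.add_apply, ContinuousLinearMap.smul_apply,
      smul_eq_mul, bp1_apply, bp2_apply, bp3_apply, bp4_apply, hK_def, hv_def]
    ring
  have hfg : fderiv ℝ (fun y => fderiv ℝ (bellmanB p) y u) x = fderiv ℝ h x :=
    hgh.fderiv_eq
  -- derivative of h
  have H0 : HasFDerivAt (fun _ : ℝ × ℝ × ℝ × ℝ => (p / (p - 1)) ^ p * u.1)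
      (0 : (ℝ × ℝ × ℝ × ℝ) →L[ℝ] ℝ) x := hasFDerivAt_const _ _
  have H1 := (hasFDerivAt_ppow p (p - 1) (-(p - 1)) x h2.ne' hs.ne').const_mul (-K * p * u.2.1)
  have H2 := (hasFDerivAt_ppow p p (-(p - 1) - 1) x h2.ne' hs.ne').const_mul
    (-K * (-(p - 1)) * v)
  have Hh : HasFDerivAt h _ x := (H0.add H1).add H2
  -- abbreviations for rpow values
  have key1 : ∀ (a b : ℝ), 0 < b → b ^ a = b ^ (a - 1) * b := by
    intro a b hb
    have h1 : b ^ (a - 1) * b ^ (1:ℝ) = b ^ a := by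
      rw [← Real.rpow_add hb]; norm_num
    rw [← h1, Real.rpow_one]
  have key2 : ∀ (a b : ℝ), 0 < b → b ^ a = b ^ (a - 2) * b * b := by
    intro a b hb
    have h1 : b ^ (a - 2) * b ^ (1:ℝ) * b ^ (1:ℝ) = b ^ a := by
      rw [mul_assoc, ← Real.rpow_add hb, ← Real.rpow_add hb]; norm_num
    rw [← h1, Real.rpow_one]
  have hX : (0:ℝ) < x.2.1 ^ (p - 2) := Real.rpow_pos_of_pos h2 _
  have hS : (0:ℝ) < s ^ (-(p - 1) - 2) := Real.rpow_pos_of_pos hs _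
  have e1 : x.2.1 ^ (p - 1 - 1) = x.2.1 ^ (p - 2) := by
    rw [show p - 1 - 1 = p - 2 by ring]
  have e2 : x.2.1 ^ (p - 1) = x.2.1 ^ (p - 2) * x.2.1 := by
    rw [key1 (p - 1) _ h2, show p - 1 - 1 = p - 2 by ring]
  have e3 : x.2.1 ^ p = x.2.1 ^ (p - 2) * x.2.1 * x.2.1 := key2 p _ h2
  have f1 : s ^ (-(p - 1)) = s ^ (-(p - 1) - 2) * s * s := key2 _ _ hs
  have f2 : s ^ (-(p - 1) - 1) = s ^ (-(p - 1) - 2) * s := by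
    rw [key1 (-(p - 1) - 1) _ hs, show -(p - 1) - 1 - 1 = -(p - 1) - 2 by ring]
  have f3 : s ^ (-(p - 1) - 1 - 1) = s ^ (-(p - 1) - 2) := by
    rw [show -(p - 1) - 1 - 1 = -(p - 1) - 2 by ring]
  -- the value of the second derivative along u
  have hval : fderiv ℝ h x u
      = -(K * p * (p - 1))
        * (x.2.1 ^ (p - 2) * s ^ (-(p - 1) - 2) * (s * u.2.1 - x.2.1 * v) ^ 2) := by
    rw [Hh.fderiv]
    simp only [ContinuousLinearMap.add_apply, ContinuousLinearMap.smul_apply,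
      ContinuousLinearMap.zero_apply, smul_eq_mul, bp2_apply, bp3_apply, bp4_apply]
    rw [e1, e2, e3, f1, f2, f3]
    rw [hv_def]
    ring
  have hK : 0 < K := div_pos (Real.rpow_pos_of_pos hp0 p) hp1
  have hval2 : fderiv ℝ (fun y => fderiv ℝ (bellmanB p) y u) x u ≤ 0 := by
    rw [hfg, hval]
    have hnn : 0 ≤ x.2.1 ^ (p - 2) * s ^ (-(p - 1) - 2) * (s * u.2.1 - x.2.1 * v) ^ 2 := by
      positivity
    have hpos : 0 < K * p * (p - 1) := by positivity
    nlinarith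
  rw [hE]
  have hT3' : p ^ p * (x.2.1 / (x.2.2.1 + (p - 1) * x.2.2.2)) ^ p = p ^ p * x.2.1 ^ p * s ^ (-p) := by
    rw [← hs_def]; exact hT3
  rw [hT3']
  linarith [hval2]
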